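/- If the correspondence packing number of G − v is at most k and the degree of v in G is at most k/2, then the correspondence packing number of G is at most k. -/

import Mathlib

/-!
A `k`-correspondence assignment (`k`-cover) of a graph is a consistent family
of permutations `σ u v h : Fin k ≃ Fin k` on its edges; a packing is a family
of `k` correspondence colorings that are pairwise distinct at every vertex.
`G - v` is modeled as the restriction of `G` to the subtype `{x // x ≠ v}`
(`G.comap Subtype.val`).  If every `k`-cover of `G - v` admits a packing
(i.e. `χ*_c(G - v) ≤ k`) and `d(v) ≤ k / 2`, then every `k`-cover of `G`
admits a packing (i.e. `χ*_c(G) ≤ k`).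
-/

theorem stmt19 {V : Type*} [Fintype V] [DecidableEq V]
    (G : SimpleGraph V) [DecidableRel G.Adj] (v : V) (k : ℕ)
    (hGv : ∀ σ : ∀ u w : {x : V // x ≠ v},
        (G.comap (Subtype.val : {x : V // x ≠ v} → V)).Adj u w → (Fin k ≃ Fin k),
      (∀ (u w : {x : V // x ≠ v})
          (h : (G.comap (Subtype.val : {x : V // x ≠ v} → V)).Adj u w),
        σ w u h.symm = (σ u w h).symm) →
      ∃ φ : Fin k → {x : V // x ≠ v} → Fin k,
        (∀ (i : Fin k) (u w : {x : V // x ≠ v})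
            (h : (G.comap (Subtype.val : {x : V // x ≠ v} → V)).Adj u w),
          σ u w h (φ i u) ≠ φ i w) ∧
        (∀ u, Function.Injective fun i => φ i u))
    (hdeg : G.degree v ≤ k / 2)
    (σ : ∀ u w : V, G.Adj u w → (Fin k ≃ Fin k))
    (hσ : ∀ (u w : V) (h : G.Adj u w), σ w u h.symm = (σ u w h).symm) :
    ∃ φ : Fin k → V → Fin k,
      (∀ (i : Fin k) (u w : V) (h : G.Adj u w), σ u w h (φ i u) ≠ φ i w) ∧
      (∀ u : V, Function.Injective fun i => φ i u) := by
  classical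
  obtain ⟨φ', hφ'1, hφ'2⟩ :=
    hGv (fun u w h => σ u.val w.val h) (fun u w h => hσ u.val w.val h)
  -- allowed colors at `v` for coloring `i`
  set t : Fin k → Finset (Fin k) := fun i =>
    Finset.univ.filter
      (fun c => ∀ w, ∀ h : G.Adj v w, σ v w h c ≠ φ' i ⟨w, (G.ne_of_adj h).symm⟩)
    with ht
  have hmem : ∀ i c, c ∈ t i ↔
      ∀ w, ∀ h : G.Adj v w, σ v w h c ≠ φ' i ⟨w, (G.ne_of_adj h).symm⟩ := by
    intro i c; simp [ht]
  have hdeg' : Fintype.card {w // w ∈ G.neighborFinset v} ≤ k / 2 := by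
    rw [Fintype.card_coe]
    exact le_trans (le_of_eq (G.card_neighborFinset_eq_degree v)) hdeg
  -- each `t i` is big
  have hbig : ∀ i, k - k / 2 ≤ (t i).card := by
    intro i
    have hex : ∀ c : {c // c ∈ Finset.univ \ t i},
        ∃ w : {w // w ∈ G.neighborFinset v}, ∃ h : G.Adj v w.val,
          σ v w.val h c.val = φ' i ⟨w.val, (G.ne_of_adj h).symm⟩ := by
      rintro ⟨c, hc⟩
      simp only [Finset.mem_sdiff, hmem] at hc
      push_neg at hc
      obtain ⟨w, h, hw⟩ := hc.2
      exact ⟨⟨w, (SimpleGraph.mem_neighborFinset G v w).mpr h⟩, h, hw⟩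
    choose F hadj heq using hex
    have hFinj : Function.Injective F := by
      intro c c' hcc
      have h1 := heq c
      have h2 := heq c'
      simp only [hcc] at h1
      exact Subtype.ext ((σ v (F c').val (hadj c')).injective (h1.trans h2.symm))
    have hcard : (Finset.univ \ t i).card ≤ k / 2 := by
      have := Fintype.card_le_of_injective F hFinj
      rw [Fintype.card_coe] at this
      exact le_trans this hdeg'
    have h1 : (Finset.univ \ t i).card = k - (t i).card := by
      rw [Finset.card_sdiff_of_subset (Finset.subset_univ _)]
      simp
    have h2 : (t i).card ≤ k := by
      simpa using Finset.card_le_card (Finset.subset_univ (t i))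
    omega
  -- each color is forbidden for few colorings
  have hsmall : ∀ c : Fin k,
      (Finset.univ.filter (fun i => c ∉ t i)).card ≤ k / 2 := by
    intro c
    have hex : ∀ i : {i // i ∈ Finset.univ.filter (fun i => c ∉ t i)},
        ∃ w : {w // w ∈ G.neighborFinset v}, ∃ h : G.Adj v w.val,
          σ v w.val h c = φ' i.val ⟨w.val, (G.ne_of_adj h).symm⟩ := by
      rintro ⟨i, hi⟩
      simp only [Finset.mem_filter, hmem] at hi
      push_neg at hi
      obtain ⟨w, h, hw⟩ := hi.2
      exact ⟨⟨w, (SimpleGraph.mem_neighborFinset G v w).mpr h⟩, h, hw⟩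
    choose F hadj heq using hex
    have hFinj : Function.Injective F := by
      intro i i' hii
      have h1 := heq i
      have h2 := heq i'
      simp only [hii] at h1
      have : φ' i.val ⟨(F i').val, (G.ne_of_adj (hadj i')).symm⟩
          = φ' i'.val ⟨(F i').val, (G.ne_of_adj (hadj i')).symm⟩ := by
        rw [← h1, ← h2]
      exact Subtype.ext (hφ'2 _ this)
    have := Fintype.card_le_of_injective F hFinj
    rw [Fintype.card_coe, Fintype.card_coe] at this
    exact le_trans this (le_trans (le_of_eq (G.card_neighborFinset_eq_degree v)) hdeg)
  have hhalf : k / 2 ≤ k - k / 2 := by omega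
  -- Hall's condition
  have hall : ∀ s : Finset (Fin k), s.card ≤ (s.biUnion t).card := by
    intro s
    rcases s.eq_empty_or_nonempty with rfl | ⟨i0, hi0⟩
    · simp
    by_cases hcase : s.card ≤ k - k / 2
    · calc s.card ≤ (t i0).card := le_trans hcase (hbig i0)
        _ ≤ (s.biUnion t).card :=
          Finset.card_le_card (Finset.subset_biUnion_of_mem t hi0)
    · have hbu : s.biUnion t = Finset.univ := by
        apply Finset.eq_univ_of_forall
        intro c
        by_contra hc
        simp only [Finset.mem_biUnion] at hc
        push_neg at hc
        have hsub : s ⊆ Finset.univ.filter (fun i => c ∉ t i) := by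
          intro i hi
          simp only [Finset.mem_filter]
          exact ⟨Finset.mem_univ i, hc i hi⟩
        have h3 := Finset.card_le_card hsub
        have h4 := hsmall c
        omega
      rw [hbu]
      simpa using Finset.card_le_card (Finset.subset_univ s)
  obtain ⟨f, hfinj, hft⟩ :=
    (Finset.all_card_le_biUnion_card_iff_existsInjective' t).mp hall
  refine ⟨fun i u => if h : u = v then f i else φ' i ⟨u, h⟩, ?_, ?_⟩
  · intro i u w h
    beta_reduce
    by_cases hu : u = v
    · by_cases hw : w = v
      · subst hu; subst hw
        exact (G.loopless.irrefl _ h).elim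
      · rw [dif_pos hu, dif_neg hw]
        subst hu
        exact (hmem i (f i)).mp (hft i) w h
    · by_cases hw : w = v
      · rw [dif_neg hu, dif_pos hw]
        subst hw
        intro heq
        have h1 : σ w u h.symm (f i) ≠ φ' i ⟨u, hu⟩ :=
          (hmem i (f i)).mp (hft i) u h.symm
        apply h1
        rw [hσ u w h, ← heq]
        simp
      · rw [dif_neg hu, dif_neg hw]
        exact hφ'1 i ⟨u, hu⟩ ⟨w, hw⟩ h
  · intro u i j hij
    by_cases hu : u = v
    · have : f i = f j := by simpa [hu] using hij
      exact hfinj this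
    · have : φ' i ⟨u, hu⟩ = φ' j ⟨u, hu⟩ := by simpa [hu] using hij
      exact hφ'2 ⟨u, hu⟩ this
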